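/- Given nonzero positive trace class operators S, X on H and T, Y on K, one has S ⊗ T = X ⊗ Y if and only if there exists r > 0 with S = r·X and T = r⁻¹·Y, where necessarily r = tr(S)/tr(X) = tr(Y)/tr(T). In particular, for density operators ρ, τ on H and σ, ω on K, ρ ⊗ σ = τ ⊗ ω if and only if ρ = τ and σ = ω. -/

import Mathlib

noncomputable section

/-- The rank-one operator `|η⟩⟨φ| : ψ ↦ ⟪φ, ψ⟫ • η`. -/
def rankOne {H : Type*} [NormedAddCommGroup H] [InnerProductSpace ℂ H] (η φ : H) :
    H →L[ℂ] H :=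
  (innerSL ℂ φ).smulRight η

/-- A pure state: a rank-one orthogonal projection onto the line spanned by a unit vector. -/
def IsPureState {H : Type*} [NormedAddCommGroup H] [InnerProductSpace ℂ H]
    (P : H →L[ℂ] H) : Prop :=
  ∃ v : H, ‖v‖ = 1 ∧ P = rankOne v v

/-- Abstract trace theory on the bounded operators of a complex Hilbert space: the
trace-class predicate, the trace functional, the trace norm `‖T‖₁ = tr |T|` and the
absolute value `|T| = √(T⋆ T)`, together with their standard properties. -/
structure TraceTheory (H : Type*) [NormedAddCommGroup H] [InnerProductSpace ℂ H]
    [CompleteSpace H] where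
  IsTraceClass : (H →L[ℂ] H) → Prop
  trace : (H →L[ℂ] H) → ℂ
  traceNorm : (H →L[ℂ] H) → ℝ
  opAbs : (H →L[ℂ] H) → (H →L[ℂ] H)
  opAbs_isPositive : ∀ T, ContinuousLinearMap.IsPositive (opAbs T)
  opAbs_mul_self : ∀ T, opAbs T * opAbs T = star T * T
  opAbs_unique : ∀ T R, ContinuousLinearMap.IsPositive R → R * R = star T * T → R = opAbs T
  isTraceClass_iff_abs : ∀ T, IsTraceClass T ↔ IsTraceClass (opAbs T)
  isTraceClass_zero : IsTraceClass 0
  isTraceClass_add : ∀ {S T}, IsTraceClass S → IsTraceClass T → IsTraceClass (S + T)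
  isTraceClass_smul : ∀ (c : ℂ) {T}, IsTraceClass T → IsTraceClass (c • T)
  isTraceClass_star : ∀ {T}, IsTraceClass T → IsTraceClass (star T)
  isTraceClass_mul_left : ∀ (B : H →L[ℂ] H) {T}, IsTraceClass T → IsTraceClass (B * T)
  isTraceClass_mul_right : ∀ (B : H →L[ℂ] H) {T}, IsTraceClass T → IsTraceClass (T * B)
  isTraceClass_rankOne : ∀ η φ : H, IsTraceClass (rankOne η φ)
  trace_add : ∀ {S T}, IsTraceClass S → IsTraceClass T → trace (S + T) = trace S + trace T
  trace_smul : ∀ (c : ℂ) (T : H →L[ℂ] H), trace (c • T) = c * trace T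
  trace_rankOne : ∀ η φ : H, trace (rankOne η φ) = (inner ℂ φ η : ℂ)
  traceNorm_eq_trace_abs : ∀ T, (traceNorm T : ℂ) = trace (opAbs T)
  traceNorm_nonneg : ∀ T, 0 ≤ traceNorm T
  traceNorm_eq_zero_iff : ∀ T, IsTraceClass T → (traceNorm T = 0 ↔ T = 0)
  traceNorm_add_le : ∀ S T, IsTraceClass S → IsTraceClass T →
    traceNorm (S + T) ≤ traceNorm S + traceNorm T
  traceNorm_smul : ∀ (c : ℂ) (T : H →L[ℂ] H), traceNorm (c • T) = ‖c‖ * traceNorm T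
  traceNorm_star : ∀ T, traceNorm (star T) = traceNorm T
  opNorm_le_traceNorm : ∀ T, IsTraceClass T → ‖T‖ ≤ traceNorm T
  traceNorm_mul_le : ∀ S T, IsTraceClass S → IsTraceClass T →
    traceNorm (S * T) ≤ traceNorm S * traceNorm T
  norm_trace_le : ∀ T, IsTraceClass T → ‖trace T‖ ≤ traceNorm T
  trace_of_positive : ∀ T, ContinuousLinearMap.IsPositive T → IsTraceClass T →
    trace T = (traceNorm T : ℂ)

/-- A density operator: a positive trace class operator of unit trace. -/
def TraceTheory.IsDensity {H : Type*} [NormedAddCommGroup H] [InnerProductSpace ℂ H]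
    [CompleteSpace H] (TT : TraceTheory H) (ρ : H →L[ℂ] H) : Prop :=
  ContinuousLinearMap.IsPositive ρ ∧ TT.IsTraceClass ρ ∧ TT.trace ρ = 1

/-- A realization of the Hilbert space tensor product `E ≅ H ⊗ K`: a bilinear map
`tmul` whose range has dense span and which multiplies inner products, together with
the induced tensor product of bounded operators, characterized on elementary tensors. -/
structure HilbertTensor (H K E : Type*)
    [NormedAddCommGroup H] [InnerProductSpace ℂ H] [CompleteSpace H]
    [NormedAddCommGroup K] [InnerProductSpace ℂ K] [CompleteSpace K]
    [NormedAddCommGroup E] [InnerProductSpace ℂ E] [CompleteSpace E] where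
  tmul : H →ₗ[ℂ] K →ₗ[ℂ] E
  inner_tmul : ∀ (x x' : H) (y y' : K),
    (inner ℂ (tmul x y) (tmul x' y') : ℂ) = (inner ℂ x x' : ℂ) * (inner ℂ y y' : ℂ)
  dense_span : Dense (↑(Submodule.span ℂ {z : E | ∃ x y, z = tmul x y}) : Set E)
  map : (H →L[ℂ] H) → (K →L[ℂ] K) → (E →L[ℂ] E)
  map_tmul : ∀ (S : H →L[ℂ] H) (T : K →L[ℂ] K) (x : H) (y : K),
    map S T (tmul x y) = tmul (S x) (T y)

section Defs

variable {H K E : Type*}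
  [NormedAddCommGroup H] [InnerProductSpace ℂ H] [CompleteSpace H]
  [NormedAddCommGroup K] [InnerProductSpace ℂ K] [CompleteSpace K]
  [NormedAddCommGroup E] [InnerProductSpace ℂ E] [CompleteSpace E]

/-- The elementary tensors `S ⊗ T` of trace class operators. -/
def ElemTensors (TH : TraceTheory H) (TK : TraceTheory K) (ht : HilbertTensor H K E) :
    Set (E →L[ℂ] E) :=
  {C | ∃ (S : H →L[ℂ] H) (T : K →L[ℂ] K),
    TH.IsTraceClass S ∧ TK.IsTraceClass T ∧ C = ht.map S T}

/-- The product states `ρ ⊗ σ` of density operators. -/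
def ProductStates (TH : TraceTheory H) (TK : TraceTheory K) (ht : HilbertTensor H K E) :
    Set (E →L[ℂ] E) :=
  {C | ∃ (ρ : H →L[ℂ] H) (σ : K →L[ℂ] K),
    TH.IsDensity ρ ∧ TK.IsDensity σ ∧ C = ht.map ρ σ}

/-- The products `π ⊗ ϖ` of pure states (rank-one projections). -/
def PureProductStates (ht : HilbertTensor H K E) : Set (E →L[ℂ] E) :=
  {C | ∃ (P : H →L[ℂ] H) (Q : K →L[ℂ] K),
    IsPureState P ∧ IsPureState Q ∧ C = ht.map P Q}

/-- Trace-norm closure of a set, inside the trace class. -/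
def tnClosure (TE : TraceTheory E) (s : Set (E →L[ℂ] E)) : Set (E →L[ℂ] E) :=
  {C | TE.IsTraceClass C ∧ ∀ ε > 0, ∃ D ∈ s, TE.traceNorm (C - D) < ε}

/-- Finite convex combinations of elements of a set of operators. -/
def ConvexCombos (s : Set (E →L[ℂ] E)) : Set (E →L[ℂ] E) :=
  {C | ∃ (n : ℕ) (p : Fin n → ℝ) (f : Fin n → E →L[ℂ] E),
    (∀ i, 0 ≤ p i) ∧ (∑ i, p i) = 1 ∧ (∀ i, f i ∈ s) ∧ C = ∑ i, (p i : ℂ) • f i}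

/-- Extreme points of a set of operators (with respect to real convex combinations). -/
def ExtremePoints (s : Set (E →L[ℂ] E)) : Set (E →L[ℂ] E) :=
  {x | x ∈ s ∧ ∀ y ∈ s, ∀ z ∈ s, ∀ t : ℝ, 0 < t → t < 1 →
    x = (t : ℂ) • y + ((1 - t : ℝ) : ℂ) • z → y = x ∧ z = x}

/-- A simple-tensor decomposition `C = Σₖ Sₖ ⊗ Tₖ` with `Σₖ ‖Sₖ‖₁‖Tₖ‖₁ < ∞`,
converging in trace norm. -/
def GenRep (TH : TraceTheory H) (TK : TraceTheory K) (TE : TraceTheory E)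
    (ht : HilbertTensor H K E) (C : E →L[ℂ] E)
    (S : ℕ → H →L[ℂ] H) (T : ℕ → K →L[ℂ] K) : Prop :=
  (∀ k, TH.IsTraceClass (S k)) ∧ (∀ k, TK.IsTraceClass (T k)) ∧
  Summable (fun k => TH.traceNorm (S k) * TK.traceNorm (T k)) ∧
  ∀ ε > 0, ∃ N : ℕ, ∀ n ≥ N,
    TE.traceNorm (C - ∑ k ∈ Finset.range n, ht.map (S k) (T k)) < ε

/-- The cross trace class `T(H) ⊗_π T(K)`, realized inside the trace class of `E = H ⊗ K`. -/
def IsCross (TH : TraceTheory H) (TK : TraceTheory K) (TE : TraceTheory E)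
    (ht : HilbertTensor H K E) (C : E →L[ℂ] E) : Prop :=
  TE.IsTraceClass C ∧ ∃ S T, GenRep TH TK TE ht C S T

/-- The projective norm `‖C‖_π` of a cross trace class operator. -/
def projNorm (TH : TraceTheory H) (TK : TraceTheory K) (TE : TraceTheory E)
    (ht : HilbertTensor H K E) (C : E →L[ℂ] E) : ℝ :=
  sInf {t | ∃ (S : ℕ → H →L[ℂ] H) (T : ℕ → K →L[ℂ] K), GenRep TH TK TE ht C S T ∧
    t = ∑' k, TH.traceNorm (S k) * TK.traceNorm (T k)}

/-- A standard decomposition `C = Σₖ rₖ (Xₖ ⊗ Yₖ)` with `rₖ ≥ 0`, `Σₖ rₖ < ∞` and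
`‖Xₖ‖₁‖Yₖ‖₁ = 1`, converging (absolutely) in trace norm. -/
def StdRep (TH : TraceTheory H) (TK : TraceTheory K) (TE : TraceTheory E)
    (ht : HilbertTensor H K E) (C : E →L[ℂ] E)
    (r : ℕ → ℝ) (X : ℕ → H →L[ℂ] H) (Y : ℕ → K →L[ℂ] K) : Prop :=
  (∀ k, 0 ≤ r k) ∧ Summable r ∧
  (∀ k, TH.IsTraceClass (X k)) ∧ (∀ k, TK.IsTraceClass (Y k)) ∧
  (∀ k, TH.traceNorm (X k) * TK.traceNorm (Y k) = 1) ∧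
  ∀ ε > 0, ∃ N : ℕ, ∀ n ≥ N,
    TE.traceNorm (C - ∑ k ∈ Finset.range n, (r k : ℂ) • ht.map (X k) (Y k)) < ε

/-- A Hermitian standard decomposition: a standard decomposition into selfadjoint
elementary tensors. -/
def HermStdRep (TH : TraceTheory H) (TK : TraceTheory K) (TE : TraceTheory E)
    (ht : HilbertTensor H K E) (C : E →L[ℂ] E)
    (r : ℕ → ℝ) (X : ℕ → H →L[ℂ] H) (Y : ℕ → K →L[ℂ] K) : Prop :=
  StdRep TH TK TE ht C r X Y ∧ (∀ k, IsSelfAdjoint (X k)) ∧ (∀ k, IsSelfAdjoint (Y k))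

/-- The Hermitian projective norm `‖C‖_{π,sa}`. -/
def hermProjNorm (TH : TraceTheory H) (TK : TraceTheory K) (TE : TraceTheory E)
    (ht : HilbertTensor H K E) (C : E →L[ℂ] E) : ℝ :=
  sInf {t | ∃ (r : ℕ → ℝ) (X : ℕ → H →L[ℂ] H) (Y : ℕ → K →L[ℂ] K),
    HermStdRep TH TK TE ht C r X Y ∧ t = ∑' k, r k}

/-- A signed decomposition `C = Σₖ tₖ (ρₖ ⊗ σₖ)` with real `tₖ`, `Σₖ |tₖ| < ∞` and
density operators `ρₖ, σₖ`, converging (absolutely) in trace norm. -/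
def SignedRep (TH : TraceTheory H) (TK : TraceTheory K) (TE : TraceTheory E)
    (ht : HilbertTensor H K E) (C : E →L[ℂ] E)
    (t : ℕ → ℝ) (ρ : ℕ → H →L[ℂ] H) (σ : ℕ → K →L[ℂ] K) : Prop :=
  Summable (fun k => |t k|) ∧ (∀ k, TH.IsDensity (ρ k)) ∧ (∀ k, TK.IsDensity (σ k)) ∧
  ∀ ε > 0, ∃ N : ℕ, ∀ n ≥ N,
    TE.traceNorm (C - ∑ k ∈ Finset.range n, (t k : ℂ) • ht.map (ρ k) (σ k)) < ε

/-- A separable state: an element of the trace-norm closed convex hull of the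
product states. -/
def IsSepState (TH : TraceTheory H) (TK : TraceTheory K) (TE : TraceTheory E)
    (ht : HilbertTensor H K E) (γ : E →L[ℂ] E) : Prop :=
  TE.IsTraceClass γ ∧
  ∀ ε > 0, ∃ C ∈ ConvexCombos (ProductStates TH TK ht), TE.traceNorm (γ - C) < ε

/-- A finite decomposition of `C` into elementary tensors of trace class operators. -/
def FinRep (TH : TraceTheory H) (TK : TraceTheory K) (ht : HilbertTensor H K E)
    (C : E →L[ℂ] E) (n : ℕ) (S : Fin n → H →L[ℂ] H) (T : Fin n → K →L[ℂ] K) : Prop :=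
  (∀ k, TH.IsTraceClass (S k)) ∧ (∀ k, TK.IsTraceClass (T k)) ∧
  C = ∑ k, ht.map (S k) (T k)

/-- The projective norm on the algebraic tensor product, via finite decompositions. -/
def finProjNorm (TH : TraceTheory H) (TK : TraceTheory K) (ht : HilbertTensor H K E)
    (C : E →L[ℂ] E) : ℝ :=
  sInf {t | ∃ (n : ℕ) (S : Fin n → H →L[ℂ] H) (T : Fin n → K →L[ℂ] K),
    FinRep TH TK ht C n S T ∧ t = ∑ k, TH.traceNorm (S k) * TK.traceNorm (T k)}

/-- The Hermitian projective norm on the algebraic tensor product, via finite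
decompositions into selfadjoint elementary tensors. -/
def finHermProjNorm (TH : TraceTheory H) (TK : TraceTheory K) (ht : HilbertTensor H K E)
    (C : E →L[ℂ] E) : ℝ :=
  sInf {t | ∃ (n : ℕ) (S : Fin n → H →L[ℂ] H) (T : Fin n → K →L[ℂ] K),
    FinRep TH TK ht C n S T ∧ (∀ k, IsSelfAdjoint (S k)) ∧ (∀ k, IsSelfAdjoint (T k)) ∧
    t = ∑ k, TH.traceNorm (S k) * TK.traceNorm (T k)}

end Defs

section Aux

set_option linter.unusedSectionVars false

variable {H K E : Type*}
  [NormedAddCommGroup H] [InnerProductSpace ℂ H] [CompleteSpace H]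
  [NormedAddCommGroup K] [InnerProductSpace ℂ K] [CompleteSpace K]
  [NormedAddCommGroup E] [InnerProductSpace ℂ E] [CompleteSpace E]

lemma aux_inner_pos_real {S : H →L[ℂ] H} (hS : ContinuousLinearMap.IsPositive S) (x : H) :
    ∃ t : ℝ, 0 ≤ t ∧ (inner ℂ x (S x) : ℂ) = (t : ℂ) := by
  obtain ⟨h1, h2⟩ := (ContinuousLinearMap.isPositive_iff_complex S).mp hS x
  refine ⟨RCLike.re (inner ℂ (S x) x : ℂ), h2, ?_⟩
  rw [← inner_conj_symm, ← h1]
  simp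

lemma aux_exists_inner_ne {S : H →L[ℂ] H} (hS0 : S ≠ 0) :
    ∃ x : H, (inner ℂ x (S x) : ℂ) ≠ 0 := by
  by_contra h
  push_neg at h
  apply hS0
  have : (S : H →ₗ[ℂ] H) = 0 := by
    rw [← inner_map_self_eq_zero]
    intro x
    rw [← inner_conj_symm]
    simp [h x]
  exact ContinuousLinearMap.ext fun x => by simpa using LinearMap.congr_fun this x

lemma aux_map_eq_smul (ht : HilbertTensor H K E) (X : H →L[ℂ] H) (Y : K →L[ℂ] K)
    (c : ℂ) (hc : c ≠ 0) : ht.map (c • X) (c⁻¹ • Y) = ht.map X Y := by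
  apply ContinuousLinearMap.ext_on ht.dense_span
  rintro z ⟨x, y, rfl⟩
  rw [ht.map_tmul, ht.map_tmul]
  simp only [ContinuousLinearMap.smul_apply, map_smul, LinearMap.smul_apply,
    smul_smul]
  rw [inv_mul_cancel₀ hc, one_smul]

lemma aux_inner_eq (ht : HilbertTensor H K E) {S X : H →L[ℂ] H} {T Y : K →L[ℂ] K}
    (h : ht.map S T = ht.map X Y) (x x' : H) (y y' : K) :
    (inner ℂ x' (S x) : ℂ) * (inner ℂ y' (T y) : ℂ)
      = (inner ℂ x' (X x) : ℂ) * (inner ℂ y' (Y y) : ℂ) := by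
  have := congrArg (fun C : E →L[ℂ] E => (inner ℂ (ht.tmul x' y') (C (ht.tmul x y)) : ℂ)) h
  simpa only [ht.map_tmul, ht.inner_tmul] using this

lemma aux_trace_ne_zero (TH : TraceTheory H) {X : H →L[ℂ] H}
    (hX : ContinuousLinearMap.IsPositive X) (hX' : TH.IsTraceClass X) (hX0 : X ≠ 0) :
    TH.trace X ≠ 0 := by
  rw [TH.trace_of_positive X hX hX']
  exact_mod_cast fun h => hX0 ((TH.traceNorm_eq_zero_iff X hX').mp (by exact_mod_cast h))

lemma aux_key (TH : TraceTheory H) (TK : TraceTheory K)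
    (ht : HilbertTensor H K E)
    (S X : H →L[ℂ] H) (T Y : K →L[ℂ] K)
    (hS : ContinuousLinearMap.IsPositive S) (hX : ContinuousLinearMap.IsPositive X)
    (hT : ContinuousLinearMap.IsPositive T) (hY : ContinuousLinearMap.IsPositive Y)
    (hS' : TH.IsTraceClass S) (hX' : TH.IsTraceClass X)
    (hT' : TK.IsTraceClass T) (hY' : TK.IsTraceClass Y)
    (hS0 : S ≠ 0) (hX0 : X ≠ 0) (hT0 : T ≠ 0) (hY0 : Y ≠ 0) :
    ht.map S T = ht.map X Y ↔
      ∃ r : ℝ, 0 < r ∧ S = (r : ℂ) • X ∧ T = ((r⁻¹ : ℝ) : ℂ) • Y ∧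
        (r : ℂ) = TH.trace S / TH.trace X ∧ (r : ℂ) = TK.trace Y / TK.trace T := by
  constructor
  · intro h
    have h1 := aux_inner_eq ht h
    obtain ⟨x₀, hx0⟩ := aux_exists_inner_ne hS0
    obtain ⟨y₀, hy0⟩ := aux_exists_inner_ne hT0
    obtain ⟨ra, hra, haa⟩ := aux_inner_pos_real hS x₀
    obtain ⟨rb, hrb, hbb⟩ := aux_inner_pos_real hT y₀
    obtain ⟨rc, hrc, hcc⟩ := aux_inner_pos_real hX x₀
    obtain ⟨rd, hrd, hdd⟩ := aux_inner_pos_real hY y₀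
    have hra0 : 0 < ra := lt_of_le_of_ne hra (by rintro rfl; exact hx0 (by simpa using haa))
    have hrb0 : 0 < rb := lt_of_le_of_ne hrb (by rintro rfl; exact hy0 (by simpa using hbb))
    have hab : ra * rb = rc * rd := by
      have := h1 x₀ x₀ y₀ y₀
      rw [haa, hbb, hcc, hdd] at this
      exact_mod_cast this
    have hcd : 0 < rc * rd := by rw [← hab]; positivity
    have hrc0 : 0 < rc := by nlinarith
    have hrd0 : 0 < rd := by nlinarith
    have hSX : S = ((rd / rb : ℝ) : ℂ) • X := by
      ext x
      apply ext_inner_left ℂ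
      intro x'
      have h2 := h1 x x' y₀ y₀
      rw [hbb, hdd] at h2
      simp only [ContinuousLinearMap.smul_apply, inner_smul_right]
      push_cast
      rw [div_mul_eq_mul_div, eq_div_iff (by exact_mod_cast hrb0.ne' : (rb : ℂ) ≠ 0)]
      linear_combination h2
    have hTY : T = (((rd / rb)⁻¹ : ℝ) : ℂ) • Y := by
      ext y
      apply ext_inner_left ℂ
      intro y'
      have h2 := h1 x₀ x₀ y y'
      rw [haa, hcc] at h2
      simp only [ContinuousLinearMap.smul_apply, inner_smul_right]
      rw [inv_div]
      push_cast
      rw [div_mul_eq_mul_div, eq_div_iff (by exact_mod_cast hrd0.ne' : (rd : ℂ) ≠ 0)]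
      have hc : (rc : ℂ) = (ra : ℂ) * rb / rd := by
        rw [eq_div_iff (by exact_mod_cast hrd0.ne' : (rd : ℂ) ≠ 0)]
        exact_mod_cast hab.symm
      rw [hc] at h2
      have hra' : (ra : ℂ) ≠ 0 := by exact_mod_cast hra0.ne'
      have hrd' : (rd : ℂ) ≠ 0 := by exact_mod_cast hrd0.ne'
      apply mul_left_cancel₀ hra'
      field_simp [hra', hrd'] at h2
      linear_combination (ra : ℂ) * h2
    have hr0 : rd / rb ≠ 0 := (div_pos hrd0 hrb0).ne'
    refine ⟨rd / rb, div_pos hrd0 hrb0, hSX, hTY, ?_, ?_⟩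
    · have hx := aux_trace_ne_zero TH hX hX' hX0
      rw [hSX, TH.trace_smul]
      rw [mul_div_assoc, div_self hx, mul_one]
    · have hyt := aux_trace_ne_zero TK hT hT' hT0
      have hYT : Y = ((rd / rb : ℝ) : ℂ) • T := by
        rw [hTY, smul_smul, ← Complex.ofReal_mul, mul_inv_cancel₀ hr0]
        simp
      rw [hYT, TK.trace_smul]
      rw [mul_div_assoc, div_self hyt, mul_one]
  · rintro ⟨r, hr, rfl, rfl, -, -⟩
    have h := aux_map_eq_smul ht X Y (r : ℂ) (by exact_mod_cast hr.ne')
    rw [← h]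
    norm_cast


lemma aux_density_ne_zero (TT : TraceTheory H) {A : H →L[ℂ] H} (hA : TT.IsDensity A) :
    A ≠ 0 := by
  rintro rfl
  have h0 : TT.trace 0 = 0 := by simpa using TT.trace_smul 0 0
  exact one_ne_zero (hA.2.2.symm.trans h0)

end Aux

theorem stmt1 {H K E : Type*}
    [NormedAddCommGroup H] [InnerProductSpace ℂ H] [CompleteSpace H]
    [TopologicalSpace.SeparableSpace H]
    [NormedAddCommGroup K] [InnerProductSpace ℂ K] [CompleteSpace K]
    [TopologicalSpace.SeparableSpace K]
    [NormedAddCommGroup E] [InnerProductSpace ℂ E] [CompleteSpace E]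
    (TH : TraceTheory H) (TK : TraceTheory K) (TE : TraceTheory E)
    (ht : HilbertTensor H K E)
    (S X : H →L[ℂ] H) (T Y : K →L[ℂ] K)
    (hS : ContinuousLinearMap.IsPositive S) (hX : ContinuousLinearMap.IsPositive X)
    (hT : ContinuousLinearMap.IsPositive T) (hY : ContinuousLinearMap.IsPositive Y)
    (hS' : TH.IsTraceClass S) (hX' : TH.IsTraceClass X)
    (hT' : TK.IsTraceClass T) (hY' : TK.IsTraceClass Y)
    (hS0 : S ≠ 0) (hX0 : X ≠ 0) (hT0 : T ≠ 0) (hY0 : Y ≠ 0) :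
    (ht.map S T = ht.map X Y ↔
      ∃ r : ℝ, 0 < r ∧ S = (r : ℂ) • X ∧ T = ((r⁻¹ : ℝ) : ℂ) • Y ∧
        (r : ℂ) = TH.trace S / TH.trace X ∧ (r : ℂ) = TK.trace Y / TK.trace T) ∧
    (∀ (ρ τ : H →L[ℂ] H) (σ ω : K →L[ℂ] K),
      TH.IsDensity ρ → TH.IsDensity τ → TK.IsDensity σ → TK.IsDensity ω →
      (ht.map ρ σ = ht.map τ ω ↔ ρ = τ ∧ σ = ω)) := by
  refine ⟨aux_key TH TK ht S X T Y hS hX hT hY hS' hX' hT' hY' hS0 hX0 hT0 hY0, ?_⟩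
  intro ρ τ σ ω hρ hτ hσ hω
  constructor
  · intro h
    obtain ⟨r, hr, h1, h2, h3, -⟩ :=
      (aux_key TH TK ht ρ τ σ ω hρ.1 hτ.1 hσ.1 hω.1 hρ.2.1 hτ.2.1 hσ.2.1 hω.2.1
        (aux_density_ne_zero TH hρ) (aux_density_ne_zero TH hτ)
        (aux_density_ne_zero TK hσ) (aux_density_ne_zero TK hω)).mp h
    rw [hρ.2.2, hτ.2.2] at h3
    have hr1 : r = 1 := by
      have : (r : ℂ) = 1 := by simpa using h3
      exact_mod_cast this
    subst hr1
    exact ⟨by simpa using h1, by simpa using h2⟩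
  · rintro ⟨rfl, rfl⟩; rfl
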